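/- Let S ⊆ ℝ^m be any convex cone and let y_1, …, y_k ∈ ℝ^m. Then the following are equivalent: (1) for all x ∈ S, max(x·y_1, …, x·y_k) ≥ 0; (2) there exist λ_1 ≥ 0, …, λ_k ≥ 0 with ∑_i λ_i = 1 such that ∑_{i=1}^{k} λ_i·(x·y_i) ≥ 0 for all x ∈ S. -/

import Mathlib

/-- For any convex cone `S ⊆ ℝ^m` and `y_1, …, y_k ∈ ℝ^m` (k ≥ 1),
the max-inequality `max_i (x·y_i) ≥ 0` holds for all `x ∈ S` iff there are
`λ_1, …, λ_k ≥ 0` with `∑ λ_i = 1` such that `∑ i λ_i (x·y_i) ≥ 0` for all `x ∈ S`. -/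
theorem stmt7 (m k : ℕ) (hk : 0 < k) (S : Set (Fin m → ℝ))
    (hSadd : ∀ x ∈ S, ∀ x' ∈ S, x + x' ∈ S)
    (hSsmul : ∀ θ : ℝ, 0 ≤ θ → ∀ x ∈ S, θ • x ∈ S)
    (y : Fin k → Fin m → ℝ) :
    (∀ x ∈ S, ∃ i : Fin k, 0 ≤ ∑ j, x j * y i j) ↔
    (∃ lam : Fin k → ℝ, (∀ i, 0 ≤ lam i) ∧ (∑ i, lam i) = 1 ∧
      ∀ x ∈ S, 0 ≤ ∑ i, lam i * ∑ j, x j * y i j) := by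
  constructor
  · intro h
    rcases S.eq_empty_or_nonempty with hS | ⟨x0, hx0⟩
    · refine ⟨fun _ => (k : ℝ)⁻¹, fun i => by positivity, ?_, by simp [hS]⟩
      simp [Finset.sum_const, Finset.card_univ]
      field_simp
    · have h0S : (0 : Fin m → ℝ) ∈ S := by simpa using hSsmul 0 le_rfl x0 hx0
      set L : (Fin m → ℝ) → (Fin k → ℝ) := fun x i => ∑ j, x j * y i j with hLdef
      have hLadd : ∀ a b, L (a + b) = L a + L b := by
        intro a b; funext i
        simp [hLdef, add_mul, Finset.sum_add_distrib]
      have hLsmul : ∀ (c : ℝ) a, L (c • a) = c • L a := by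
        intro c a; funext i
        simp [hLdef, Finset.mul_sum, mul_assoc]
      set T : Set (Fin k → ℝ) := L '' S with hT
      set N : Set (Fin k → ℝ) := {z | ∀ i, z i < 0} with hN
      have hNopen : IsOpen N := by
        have : N = ⋂ i, {z : Fin k → ℝ | z i < 0} := by
          ext z; simp [hN]
        rw [this]
        exact isOpen_iInter_of_finite fun i =>
          isOpen_lt (continuous_apply i) continuous_const
      have hNconv : Convex ℝ N := by
        have hNeq : N = ⋂ i, {z : Fin k → ℝ | z i < 0} := by
          ext z; simp [hN]
        rw [hNeq]
        exact convex_iInter fun i =>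
          convex_halfSpace_lt ⟨fun a b => rfl, fun c a => rfl⟩ 0
      have hSconv : Convex ℝ S := by
        intro a ha b hb s t hs ht _
        exact hSadd _ (hSsmul s hs a ha) _ (hSsmul t ht b hb)
      have hTconv : Convex ℝ T := by
        rintro _ ⟨a, ha, rfl⟩ _ ⟨b, hb, rfl⟩ s t hs ht hst
        refine ⟨s • a + t • b, hSconv ha hb hs ht hst, ?_⟩
        rw [hLadd, hLsmul, hLsmul]
      have hdisj : Disjoint N T := by
        rw [Set.disjoint_left]
        rintro z hz ⟨x, hx, rfl⟩
        obtain ⟨i, hi⟩ := h x hx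
        exact absurd hi (not_le.2 (hz i))
      obtain ⟨f, u, hfN, hfT⟩ := geometric_hahn_banach_open hNconv hNopen hTconv hdisj
      have hu0 : u ≤ 0 := by
        have := hfT (L 0) ⟨0, h0S, rfl⟩
        have hL0 : L 0 = 0 := by funext i; simp [hLdef]
        simpa [hL0] using this
      -- f is nonpositive on the nonpositive orthant
      have hfneg : ∀ z : Fin k → ℝ, (∀ i, z i ≤ 0) → f z ≤ 0 := by
        intro z hz
        by_contra hc
        push_neg at hc
        set A : ℝ := f (fun _ => (1 : ℝ)) with hA
        have key : ∀ δ : ℝ, 0 < δ → f z - δ * A < u := by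
          intro δ hδ
          have hmem : (z - δ • (fun _ => (1:ℝ))) ∈ N := by
            intro i
            simp only [Pi.sub_apply, Pi.smul_apply, smul_eq_mul, mul_one]
            have := hz i; linarith
          have := hfN _ hmem
          simpa [map_sub, map_smul, smul_eq_mul, hA] using this
        rcases le_or_gt A 0 with hA0 | hA0
        · have := key 1 one_pos
          nlinarith
        · have := key (f z / (2 * A)) (by positivity)
          have : f z - (f z / (2 * A)) * A = f z / 2 := by field_simp; ring
          nlinarith [key (f z / (2 * A)) (by positivity)]
      -- f is nonnegative on T
      have hfTpos : ∀ x ∈ S, 0 ≤ f (L x) := by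
        intro x hx
        by_contra hc
        push_neg at hc
        have hne : f (L x) ≠ 0 := ne_of_lt hc
        set θ : ℝ := (u - 1) / f (L x) with hθ
        have hθpos : 0 < θ := div_pos_of_neg_of_neg (by linarith) hc
        have hmem : L (θ • x) ∈ T := ⟨θ • x, hSsmul θ hθpos.le x hx, rfl⟩
        have h2 := hfT _ hmem
        rw [hLsmul, map_smul, smul_eq_mul] at h2
        have h3 : θ * f (L x) = u - 1 := by
          rw [hθ]; field_simp
        rw [h3] at h2
        linarith
      set lam0 : Fin k → ℝ := fun i => f (fun j => if i = j then 1 else 0) with hlam0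
      have hlam0nn : ∀ i, 0 ≤ lam0 i := by
        intro i
        have := hfneg (fun j => if i = j then -1 else 0)
          (fun j => by by_cases h : i = j <;> simp [h])
        have heq : (fun j => if i = j then (-1:ℝ) else 0) =
            -(fun j => if i = j then (1:ℝ) else 0) := by
          funext j; by_cases h : i = j <;> simp [h]
        rw [heq, map_neg] at this
        simpa [hlam0] using this
      have hfz : ∀ z : Fin k → ℝ, f z = ∑ i, z i * lam0 i := by
        intro z
        conv_lhs => rw [pi_eq_sum_univ z]
        rw [map_sum]
        refine Finset.sum_congr rfl fun i _ => ?_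
        rw [map_smul]; simp [hlam0, smul_eq_mul]
      have hsumpos : 0 < ∑ i, lam0 i := by
        rcases (Finset.sum_nonneg fun i _ => hlam0nn i).lt_or_eq with h' | h'
        · exact h'
        · exfalso
          have hall : ∀ i, lam0 i = 0 := by
            intro i
            have := (Finset.sum_eq_zero_iff_of_nonneg fun i _ => hlam0nn i).1 h'.symm
            exact this i (Finset.mem_univ i)
          have hmem : (fun _ => (-1:ℝ)) ∈ N := fun i => by norm_num
          have := hfN _ hmem
          rw [hfz] at this
          simp [hall] at this
          linarith
      set Sg0 : ℝ := ∑ i, lam0 i with hSg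
      refine ⟨fun i => lam0 i / Sg0, fun i => div_nonneg (hlam0nn i) hsumpos.le, ?_, ?_⟩
      · rw [← Finset.sum_div]
        field_simp
        exact hSg.symm
      · intro x hx
        have h1 : 0 ≤ f (L x) := hfTpos x hx
        rw [hfz] at h1
        have : ∑ i, lam0 i / Sg0 * ∑ j, x j * y i j
            = (∑ i, (L x) i * lam0 i) / Sg0 := by
          rw [Finset.sum_div]
          refine Finset.sum_congr rfl fun i _ => ?_
          simp [hLdef]; ring
        rw [this]
        exact div_nonneg h1 hsumpos.le
  · rintro ⟨lam, hnn, hsum, hpos⟩ x hx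
    by_contra hc
    push_neg at hc
    obtain ⟨i0, hi0⟩ : ∃ i, 0 < lam i := by
      by_contra hc2
      push_neg at hc2
      have : ∀ i, lam i = 0 := fun i => le_antisymm (hc2 i) (hnn i)
      simp [this] at hsum
    have : ∑ i, lam i * ∑ j, x j * y i j < ∑ i : Fin k, (0:ℝ) := by
      apply Finset.sum_lt_sum
      · intro i _
        exact mul_nonpos_of_nonneg_of_nonpos (hnn i) (hc i).le
      · exact ⟨i0, Finset.mem_univ i0, mul_neg_of_pos_of_neg hi0 (hc i0)⟩
    simp at this
    linarith [hpos x hx]
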